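/- Let b ∈ ℝ^n be a unit vector with all entries nonzero, let λ be the smallest eigenvalue of W(b), and let x be a unit eigenvector of W(b) for λ. Suppose b is a critical point of ξ(b) := smallest eigenvalue of W(b) on the unit sphere, in the sense that for every v ∈ ℝ^n with vᵀ b = 0 the function t ↦ ξ(b + t v) has derivative 0 at t = 0. Then W(x) b = λ b (in addition to W(b) x = λ x). -/

import Mathlib

open Matrix BigOperators

/-- The Cauchy matrix with entries `1/(λᵢ + λⱼ)`. -/
noncomputable def cauchyPsi (n : ℕ) (lam : Fin n → ℝ) : Matrix (Fin n) (Fin n) ℝ :=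
  Matrix.of fun i j => 1 / (lam i + lam j)

/-- `W(b) = diag(b) Ψ diag(b)`. -/
noncomputable def cauchyW (n : ℕ) (lam : Fin n → ℝ) (b : Fin n → ℝ) :
    Matrix (Fin n) (Fin n) ℝ :=
  Matrix.diagonal b * cauchyPsi n lam * Matrix.diagonal b

/-- At a critical point `b` of `ξ(b) = λ_min(W(b))` on the unit sphere, with `λ` the
smallest eigenvalue of `W(b)` and `x` a unit eigenvector for `λ`, one also has
`W(x) b = λ b`. -/

lemma aux_rayleigh {n : ℕ} (M : Matrix (Fin n) (Fin n) ℝ) (hM : M.IsHermitian)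
    (y : Fin n → ℝ) (hy : ∑ i, y i ^ 2 = 1) :
    sInf (spectrum ℝ M) ≤ y ⬝ᵥ M *ᵥ y := by
  set c := sInf (spectrum ℝ M) with hc
  have h1 : (M - algebraMap ℝ (Matrix (Fin n) (Fin n) ℝ) c).IsHermitian := by
    apply hM.sub
    rw [Matrix.algebraMap_eq_diagonal]
    exact Matrix.isHermitian_diagonal _
  have hnn : ∀ i, 0 ≤ h1.eigenvalues i := by
    intro i
    have hmem := h1.eigenvalues_mem_spectrum_real i
    rw [← spectrum.sub_singleton_eq] at hmem
    obtain ⟨μ, hμ, r, hr, hrr⟩ := hmem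
    have hcb : c ≤ μ := csInf_le (Matrix.finite_real_spectrum.bddBelow) hμ
    simp only [Set.mem_singleton_iff] at hr
    subst hr
    have : μ - c = h1.eigenvalues i := hrr
    linarith
  have hpsd := h1.posSemidef_iff_eigenvalues_nonneg.mpr hnn
  have h2 := (Matrix.posSemidef_iff_dotProduct_mulVec.mp hpsd).2 y
  have h3 : (M - algebraMap ℝ (Matrix (Fin n) (Fin n) ℝ) c) *ᵥ y = M *ᵥ y - c • y := by
    rw [Matrix.sub_mulVec]
    congr 1
    rw [Algebra.algebraMap_eq_smul_one, Matrix.smul_mulVec, Matrix.one_mulVec]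
  rw [h3] at h2
  simp only [star_trivial, dotProduct_sub, dotProduct_smul, smul_eq_mul] at h2
  have h4 : y ⬝ᵥ y = 1 := by
    rw [dotProduct]; rw [← hy]; exact Finset.sum_congr rfl fun i _ => (sq (y i)).symm
  rw [h4] at h2
  linarith

lemma cauchyW_entry (n : ℕ) (lam : Fin n → ℝ) (c : Fin n → ℝ) (i j : Fin n) :
    cauchyW n lam c i j = c i * cauchyPsi n lam i j * c j := by
  simp [cauchyW, Matrix.mul_diagonal, Matrix.diagonal_mul]

lemma cauchyPsi_symm (n : ℕ) (lam : Fin n → ℝ) (i j : Fin n) :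
    cauchyPsi n lam i j = cauchyPsi n lam j i := by
  simp [cauchyPsi, add_comm]

lemma cauchyW_isHermitian (n : ℕ) (lam : Fin n → ℝ) (c : Fin n → ℝ) :
    (cauchyW n lam c).IsHermitian := by
  ext i j
  simp only [conjTranspose_apply, star_trivial]
  rw [cauchyW_entry, cauchyW_entry, cauchyPsi_symm]
  ring

theorem critical_point_symmetry (n : ℕ) (hn : 0 < n) (lam : Fin n → ℝ)
    (hpos : ∀ i, 0 < lam i) (hmono : StrictMono lam)
    (b : Fin n → ℝ) (hb_unit : ∑ i, b i ^ 2 = 1) (hb : ∀ i, b i ≠ 0)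
    (x : Fin n → ℝ) (hx_unit : ∑ i, x i ^ 2 = 1)
    (hx_eig : (cauchyW n lam b).mulVec x =
      sInf (spectrum ℝ (cauchyW n lam b)) • x)
    (hcrit : ∀ v : Fin n → ℝ, v ⬝ᵥ b = 0 →
      HasDerivAt (fun t : ℝ => sInf (spectrum ℝ (cauchyW n lam (b + t • v)))) 0 0) :
    (cauchyW n lam x).mulVec b = sInf (spectrum ℝ (cauchyW n lam b)) • b := by
  classical
  set lmin := sInf (spectrum ℝ (cauchyW n lam b)) with hlmin
  set Ψ := cauchyPsi n lam with hΨ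
  set S : Fin n → ℝ := fun i => ∑ j, Ψ i j * (b j * x j) with hS
  -- eigen equation componentwise
  have heig : ∀ i, b i * S i = lmin * x i := by
    intro i
    have h := congrFun hx_eig i
    simp only [Matrix.mulVec, dotProduct, Pi.smul_apply, smul_eq_mul] at h
    rw [← h, hS, Finset.mul_sum]
    refine Finset.sum_congr rfl fun j _ => ?_
    rw [cauchyW_entry]
    ring
  set y : Fin n → ℝ := fun i => x i * S i with hy
  have hPs : ∀ i j, Ψ i j = Ψ j i := fun i j => cauchyPsi_symm n lam i j
  -- quadratic form as an explicit polynomial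
  have hquad : ∀ (w : Fin n → ℝ) (t : ℝ),
      x ⬝ᵥ (cauchyW n lam (b + t • w)) *ᵥ x =
      ∑ i, ∑ j, (x i * Ψ i j * x j) * ((b i + t * w i) * (b j + t * w j)) := by
    intro w t
    simp only [dotProduct, Matrix.mulVec, Finset.mul_sum]
    refine Finset.sum_congr rfl fun i _ => Finset.sum_congr rfl fun j _ => ?_
    rw [cauchyW_entry]
    simp only [Pi.add_apply, Pi.smul_apply, smul_eq_mul]
    ring
  -- key consequence of criticality
  have hkey : ∀ v : Fin n → ℝ, v ⬝ᵥ b = 0 → ∑ i, v i * y i = 0 := by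
    intro v hv
    set g : ℝ → ℝ := fun t =>
      ∑ i, ∑ j, (x i * Ψ i j * x j) * ((b i + t * v i) * (b j + t * v j)) with hg
    set D : ℝ := ∑ i, ∑ j, (x i * Ψ i j * x j) * (v i * b j + b i * v j) with hD
    have hgderiv : HasDerivAt g D 0 := by
      rw [hg, hD]
      apply HasDerivAt.fun_sum
      intro i _
      apply HasDerivAt.fun_sum
      intro j _
      have h1 : HasDerivAt (fun t : ℝ => b i + t * v i) (v i) 0 := by
        simpa using ((hasDerivAt_id (0 : ℝ)).mul_const (v i)).const_add (b i)
      have h2 : HasDerivAt (fun t : ℝ => b j + t * v j) (v j) 0 := by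
        simpa using ((hasDerivAt_id (0 : ℝ)).mul_const (v j)).const_add (b j)
      have h3 := (h1.mul h2).const_mul (x i * Ψ i j * x j)
      simpa [mul_add, add_mul, mul_comm, mul_left_comm, mul_assoc] using h3
    set f : ℝ → ℝ := fun t => sInf (spectrum ℝ (cauchyW n lam (b + t • v))) with hf
    have hfderiv : HasDerivAt f 0 0 := hcrit v hv
    have hle : ∀ t, f t ≤ g t := by
      intro t
      have h := aux_rayleigh (cauchyW n lam (b + t • v)) (cauchyW_isHermitian n lam _) x hx_unit
      rw [hquad v t] at h
      exact h
    have hf0 : f 0 = lmin := by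
      simp only [hf]
      norm_num
      exact hlmin.symm
    have hg0 : g 0 = lmin := by
      have h6 : g 0 = x ⬝ᵥ cauchyW n lam (b + (0:ℝ) • v) *ᵥ x := (hquad v 0).symm
      rw [h6]
      simp only [zero_smul, add_zero]
      rw [hx_eig]
      simp only [dotProduct, Pi.smul_apply, smul_eq_mul]
      calc ∑ i, x i * (lmin * x i) = lmin * ∑ i, x i ^ 2 := by
            rw [Finset.mul_sum]; exact Finset.sum_congr rfl fun i _ => by ring
        _ = lmin := by rw [hx_unit, mul_one]
    -- g - f has a local min at 0
    have hmin : IsLocalMin (fun t => g t - f t) 0 := by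
      apply Filter.Eventually.of_forall
      intro t
      show g 0 - f 0 ≤ g t - f t
      rw [hf0, hg0]
      linarith [hle t]
    have hD0 : D - 0 = 0 := hmin.hasDerivAt_eq_zero (hgderiv.sub hfderiv)
    have hD0' : D = 0 := by linarith
    -- unfold D into 2 * ∑ v i * y i
    have hsplit : D = 2 * ∑ i, v i * y i := by
      rw [hD]
      have e1 : ∀ i j : Fin n, (x i * Ψ i j * x j) * (v i * b j + b i * v j) =
          (x i * Ψ i j * x j) * (v i * b j) + (x i * Ψ i j * x j) * (b i * v j) := by
        intro i j; ring
      simp only [e1, Finset.sum_add_distrib]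
      have e2 : ∑ i, ∑ j, (x i * Ψ i j * x j) * (b i * v j)
          = ∑ i, ∑ j, (x i * Ψ i j * x j) * (v i * b j) := by
        rw [Finset.sum_comm]
        refine Finset.sum_congr rfl fun i _ => Finset.sum_congr rfl fun j _ => ?_
        rw [hPs j i]
        ring
      rw [e2]
      have e3 : ∀ i, ∑ j, (x i * Ψ i j * x j) * (v i * b j) = v i * y i := by
        intro i
        have h8 : v i * y i = ∑ j, v i * (x i * (Ψ i j * (b j * x j))) := by
          show v i * (x i * ∑ j, Ψ i j * (b j * x j)) = _
          rw [Finset.mul_sum, Finset.mul_sum]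
        rw [h8]
        exact Finset.sum_congr rfl fun j _ => by ring
      rw [Finset.sum_congr rfl (fun i _ => e3 i)]
      ring
    rw [hsplit] at hD0'
    linarith
  -- now conclude y = lmin • b
  set c : ℝ := ∑ i, y i * b i with hc
  have hcval : c = lmin := by
    have h9 : ∑ i, y i * b i = ∑ i, lmin * x i ^ 2 := by
      refine Finset.sum_congr rfl fun i _ => ?_
      show (x i * S i) * b i = lmin * x i ^ 2
      calc (x i * S i) * b i = x i * (b i * S i) := by ring
        _ = x i * (lmin * x i) := by rw [heig i]
        _ = lmin * x i ^ 2 := by ring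
    rw [hc, h9, ← Finset.mul_sum, hx_unit, mul_one]
  set v : Fin n → ℝ := fun i => y i - c * b i with hvdef
  have hvb : v ⬝ᵥ b = 0 := by
    simp only [dotProduct, hvdef, sub_mul, Finset.sum_sub_distrib]
    have : ∑ i, c * b i * b i = c * ∑ i, b i ^ 2 := by
      rw [Finset.mul_sum]
      refine Finset.sum_congr rfl fun i _ => by ring
    rw [this, hb_unit, hc]
    ring
  have hvy : ∑ i, v i * y i = 0 := hkey v hvb
  have hvv : ∑ i, v i * v i = 0 := by
    have : ∀ i, v i * v i = v i * y i - c * (v i * b i) := by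
      intro i; simp only [hvdef]; ring
    simp only [this, Finset.sum_sub_distrib, hvy, ← Finset.mul_sum]
    have hvb' : ∑ i, v i * b i = 0 := hvb
    rw [hvb']
    ring
  have hvzero : ∀ i, v i = 0 := by
    intro i
    have hnn : ∀ j ∈ Finset.univ, (0:ℝ) ≤ v j * v j := fun j _ => mul_self_nonneg _
    have := (Finset.sum_eq_zero_iff_of_nonneg hnn).mp hvv i (Finset.mem_univ i)
    exact mul_self_eq_zero.mp this
  have hyi : ∀ i, y i = lmin * b i := by
    intro i
    have := hvzero i
    simp only [hvdef] at this
    rw [← hcval]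
    linarith
  funext i
  have hWx : (cauchyW n lam x *ᵥ b) i = y i := by
    simp only [Matrix.mulVec, dotProduct, hy, hS, Finset.mul_sum]
    refine Finset.sum_congr rfl fun j _ => ?_
    rw [cauchyW_entry]
    ring
  rw [hWx, hyi i]
  simp [hlmin]
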